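/- arXiv:2304.04172 — 3 statements merged into one kernel-verified Lean document; each statement's English description precedes it below -/
import Mathlib

section
/- Let f: K → ℝ be a convex function on a convex set K with minimizer w* ∈ K. Let (α_t) be nonnegative weights and (w_t), (x_t) sequences in K such that x_t is the α-weighted average of w_1,...,w_t, i.e., x_t = (1/∑_{τ=1}^t α_τ) ∑_{τ=1}^t α_τ w_τ. Then for every t ≥ 1, (∑_{τ=1}^t α_τ)(f(x_t) - f(w*)) ≤ ∑_{τ=1}^t α_τ ⟨∇f(x_τ), w_τ - w*⟩. -/
open scoped RealInnerProductSpace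


theorem grad_ineq {n : ℕ} {K : Set (EuclideanSpace ℝ (Fin n))}
    {f : EuclideanSpace ℝ (Fin n) → ℝ} (hf : ConvexOn ℝ K f)
    {g x y : EuclideanSpace ℝ (Fin n)} (hx : x ∈ K) (hy : y ∈ K)
    (h : HasGradientAt f g x) : ⟪g, y - x⟫ ≤ f y - f x := by
  set φ : ℝ → EuclideanSpace ℝ (Fin n) := fun θ => x + θ • (y - x) with hφ
  have hc : ∀ θ : ℝ, HasDerivAt φ (y - x) θ := by
    intro θ
    have := ((hasDerivAt_id' θ).smul_const (y - x)).const_add x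
    simpa only [one_smul] using this
  have hder : HasDerivAt (fun θ => f (φ θ)) ⟪g, y - x⟫ 0 := by
    have hF : HasFDerivAt f (InnerProductSpace.toDual ℝ _ g) (φ 0) := by
      have := hasGradientAt_iff_hasFDerivAt.mp h
      simpa [hφ] using this
    exact hF.comp_hasDerivAt 0 (hc 0)
  have hslope : Filter.Tendsto (fun θ : ℝ => (f (φ θ) - f (φ 0)) / θ)
      (nhdsWithin 0 (Set.Ioi 0)) (nhds ⟪g, y - x⟫) := by
    have := hasDerivAt_iff_tendsto_slope.mp hder
    have h2 := this.mono_left (nhdsWithin_mono 0 (by intro a ha; exact ne_of_gt ha))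
    refine h2.congr (fun θ => ?_)
    simp [slope_def_field, div_eq_inv_mul]
  have hev : ∀ᶠ θ : ℝ in nhdsWithin 0 (Set.Ioi 0),
      (f (φ θ) - f (φ 0)) / θ ≤ f y - f x := by
    filter_upwards [Ioc_mem_nhdsGT_of_mem (by norm_num : (0:ℝ) ∈ Set.Ico (0:ℝ) 1)]
      with θ hθ
    obtain ⟨h0, h1⟩ := hθ
    have hconv : f (φ θ) ≤ (1 - θ) * f x + θ * f y := by
      have := hf.2 hx hy (by linarith : (0:ℝ) ≤ 1 - θ) (le_of_lt h0) (by ring)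
      have heq : (1 - θ) • x + θ • y = φ θ := by
        simp only [hφ, smul_sub]
        module
      rw [heq] at this
      simpa using this
    rw [div_le_iff₀ h0]
    simp only [hφ]
    simp only [zero_smul, add_zero]
    nlinarith
  exact le_of_tendsto hslope hev

/-- Anytime averaging guarantee: If `f` is convex on a convex set `K` with
minimizer `w*`, `α τ ≥ 0`, and `x t` is the `α`-weighted average of `w 1, ..., w t`, then
`(∑_{τ=1}^t α τ) (f (x t) - f w*) ≤ ∑_{τ=1}^t α τ ⟪∇f (x τ), w τ - w*⟫`. -/
theorem stmt0 {n : ℕ} (K : Set (EuclideanSpace ℝ (Fin n))) (hK : Convex ℝ K)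
    (f : EuclideanSpace ℝ (Fin n) → ℝ) (hf : ConvexOn ℝ K f)
    (G : EuclideanSpace ℝ (Fin n) → EuclideanSpace ℝ (Fin n))
    (hgrad : ∀ x ∈ K, HasGradientAt f (G x) x)
    (wstar : EuclideanSpace ℝ (Fin n)) (hws : wstar ∈ K)
    (hmin : ∀ y ∈ K, f wstar ≤ f y)
    (α : ℕ → ℝ) (hα : ∀ t, 0 ≤ α t)
    (w x : ℕ → EuclideanSpace ℝ (Fin n)) (hw : ∀ t, 1 ≤ t → w t ∈ K)
    (hpos : ∀ t, 1 ≤ t → 0 < ∑ τ ∈ Finset.Icc 1 t, α τ)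
    (hx : ∀ t, 1 ≤ t →
      x t = (∑ τ ∈ Finset.Icc 1 t, α τ)⁻¹ • ∑ τ ∈ Finset.Icc 1 t, α τ • w τ) :
    ∀ t, 1 ≤ t →
      (∑ τ ∈ Finset.Icc 1 t, α τ) * (f (x t) - f wstar)
        ≤ ∑ τ ∈ Finset.Icc 1 t, α τ * ⟪G (x τ), w τ - wstar⟫ := by
  have hxK : ∀ t, 1 ≤ t → x t ∈ K := by
    intro t ht
    rw [hx t ht, Finset.smul_sum]
    simp_rw [smul_smul]
    refine hK.sum_mem (fun i _ => mul_nonneg (inv_nonneg.2 (hpos t ht).le) (hα i)) ?_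
      (fun i hi => hw i (Finset.mem_Icc.mp hi).1)
    rw [← Finset.mul_sum, inv_mul_cancel₀ (hpos t ht).ne']
  intro t ht
  induction t with
  | zero => omega
  | succ k ih =>
    rcases Nat.lt_or_ge k 1 with hk0 | hk1
    · -- base case t = 1
      interval_cases k
      have hx1 : x 1 = w 1 := by
        rw [hx 1 le_rfl]
        simp only [Finset.Icc_self, Finset.sum_singleton]
        have h1 : (0:ℝ) < α 1 := by simpa using hpos 1 le_rfl
        exact inv_smul_smul₀ h1.ne' _
      simp only [Finset.Icc_self, Finset.sum_singleton]
      have hg := grad_ineq hf (hxK 1 le_rfl) hws (hgrad _ (hxK 1 le_rfl))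
      have : f (x 1) - f wstar ≤ ⟪G (x 1), w 1 - wstar⟫ := by
        have h2 : ⟪G (x 1), x 1 - wstar⟫ = -⟪G (x 1), wstar - x 1⟫ := by
          rw [← inner_neg_right]; congr 1; abel
        rw [← hx1]; linarith [hg, h2.symm ▸ (neg_le_neg hg)]
      exact mul_le_mul_of_nonneg_left this (hα 1)
    · -- inductive step
      set S := ∑ τ ∈ Finset.Icc 1 k, α τ with hS
      have hSk := hpos k hk1
      have h1k1 : 1 ≤ k + 1 := by omega
      have hS' : 0 < S + α (k+1) := by
        have := hpos (k+1) h1k1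
        rwa [Finset.sum_Icc_succ_top h1k1] at this
      have hwsum : ∑ τ ∈ Finset.Icc 1 k, α τ • w τ = S • x k := by
        rw [hx k hk1, smul_inv_smul₀ hSk.ne']
      have hrec : (S + α (k+1)) • x (k+1) = S • x k + α (k+1) • w (k+1) := by
        rw [hx (k+1) h1k1, Finset.sum_Icc_succ_top h1k1,
          Finset.sum_Icc_succ_top h1k1, hwsum, ← hS, smul_inv_smul₀ hS'.ne']
      have hxk := hxK k hk1
      have hxk1 := hxK (k+1) h1k1
      set g := G (x (k+1)) with hg
      have g1 : f (x (k+1)) - f wstar ≤ ⟪g, x (k+1) - wstar⟫ := by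
        have h := grad_ineq hf hxk1 hws (hgrad _ hxk1)
        have h2 : ⟪g, x (k+1) - wstar⟫ = -⟪g, wstar - x (k+1)⟫ := by
          rw [← inner_neg_right]; congr 1; abel
        rw [h2]; linarith
      have g2 : f (x (k+1)) - f (x k) ≤ ⟪g, x (k+1) - x k⟫ := by
        have h := grad_ineq hf hxk1 hxk (hgrad _ hxk1)
        have h2 : ⟪g, x (k+1) - x k⟫ = -⟪g, x k - x (k+1)⟫ := by
          rw [← inner_neg_right]; congr 1; abel
        rw [h2]; linarith
      have hvec : S • (x (k+1) - x k) + α (k+1) • (x (k+1) - wstar)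
          = α (k+1) • (w (k+1) - wstar) := by
        have := hrec
        simp only [smul_sub] at *
        linear_combination (norm := module) this
      have hsum : S * ⟪g, x (k+1) - x k⟫ + α (k+1) * ⟪g, x (k+1) - wstar⟫
          = α (k+1) * ⟪g, w (k+1) - wstar⟫ := by
        rw [← real_inner_smul_right, ← real_inner_smul_right, ← inner_add_right, hvec,
          real_inner_smul_right]
      have ih' := ih hk1
      rw [Finset.sum_Icc_succ_top h1k1, Finset.sum_Icc_succ_top h1k1, ← hS, ← hg]
      have m1 := mul_le_mul_of_nonneg_left g2 hSk.le
      have m2 := mul_le_mul_of_nonneg_left g1 (hα (k+1))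
      nlinarith [m1, m2, hsum, ih']
end

section
/- Let T > 2 be an integer, (A_t)_{t∈[T]} nonnegative reals, and (B_t)_{t∈[T]} a monotonically increasing sequence of nonnegative reals such that for every t ≤ T, t·A_t ≤ B_t + (1/(4(1 + log T))) ∑_{τ=1}^t A_τ. Then for every t ≤ T, A_t ≤ 2B_t / t. -/
lemma sum_inv_Icc_le (n : ℕ) : ∑ τ ∈ Finset.Icc 1 n, (1 : ℝ) / τ ≤ 1 + Real.log n := by
  have hh := harmonic_le_one_add_log n
  have heq : ∑ τ ∈ Finset.Icc 1 n, (1 : ℝ) / τ = (harmonic n : ℝ) := by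
    rw [harmonic_eq_sum_Icc]
    push_cast
    simp [one_div]
  linarith [heq ▸ hh]

/-- If `T > 2`, `A t ≥ 0`, `B t` nonnegative and monotone increasing, and
`t * A t ≤ B t + (1/(4(1+log T))) ∑_{τ=1}^t A τ` for all `t ∈ [T]`, then
`A t ≤ 2 B t / t` for all `t ∈ [T]`. -/
theorem stmt4 (T : ℕ) (hT : 2 < T) (A B : ℕ → ℝ)
    (hA : ∀ t ∈ Finset.Icc 1 T, 0 ≤ A t)
    (hB0 : 0 ≤ B 1)
    (hBmono : ∀ s ∈ Finset.Icc 1 T, ∀ t ∈ Finset.Icc 1 T, s ≤ t → B s ≤ B t)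
    (h : ∀ t ∈ Finset.Icc 1 T,
      (t : ℝ) * A t ≤ B t + (1 / (4 * (1 + Real.log T))) * ∑ τ ∈ Finset.Icc 1 t, A τ) :
    ∀ t ∈ Finset.Icc 1 T, A t ≤ 2 * B t / (t : ℝ) := by
  set L := Real.log T with hLdef
  have hL1 : 1 ≤ L := by
    have h3 : Real.log 3 ≤ L := by
      apply Real.log_le_log (by norm_num)
      exact_mod_cast hT
    have : (1 : ℝ) < Real.log 3 := by
      rw [Real.lt_log_iff_exp_lt (by norm_num)]
      calc Real.exp 1 < 2.7182818286 := Real.exp_one_lt_d9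
        _ < 3 := by norm_num
    linarith
  set c : ℝ := 1 / (4 * (1 + L)) with hcdef
  have hLpos : (0:ℝ) < 1 + L := by linarith
  have hcpos : 0 < c := by positivity
  have hc8 : c ≤ 1 / 8 := by
    rw [hcdef, div_le_div_iff₀ (by linarith) (by norm_num)]
    linarith
  have hckey : c * (2 * (1 + L)) = 1 / 2 := by
    field_simp [hcdef]
    have h4 : c * (4 * (1 + L)) = 1 := by
      rw [hcdef]; exact one_div_mul_cancel (mul_pos (by norm_num) hLpos).ne'
    linear_combination h4
  intro t
  induction t using Nat.strong_induction_on with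
  | _ t ih =>
    intro ht
    obtain ⟨ht1, htT⟩ := Finset.mem_Icc.mp ht
    obtain ⟨s, rfl⟩ : ∃ s, t = s + 1 := ⟨t - 1, by omega⟩
    have hBt : 0 ≤ B (s + 1) := by
      rcases eq_or_lt_of_le ht1 with h1 | h1
      · rw [← h1]; exact hB0
      · exact hB0.trans (hBmono 1 (Finset.mem_Icc.mpr ⟨le_refl 1, by omega⟩) (s+1) ht ht1)
    -- bound the partial sum over Icc 1 s
    have hsum : ∑ τ ∈ Finset.Icc 1 s, A τ ≤ 2 * B (s + 1) * (1 + L) := by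
      have step1 : ∑ τ ∈ Finset.Icc 1 s, A τ ≤
          ∑ τ ∈ Finset.Icc 1 s, 2 * B (s + 1) * (1 / (τ : ℝ)) := by
        apply Finset.sum_le_sum
        intro τ hτ
        obtain ⟨hτ1, hτs⟩ := Finset.mem_Icc.mp hτ
        have hτT : τ ∈ Finset.Icc 1 T := Finset.mem_Icc.mpr ⟨hτ1, by omega⟩
        have hAτ : A τ ≤ 2 * B τ / τ := ih τ (by omega) hτT
        have hBτ : B τ ≤ B (s + 1) := hBmono τ hτT (s+1) ht (by omega)
        have hτpos : (0:ℝ) < τ := by exact_mod_cast hτ1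
        rw [le_div_iff₀ hτpos] at hAτ
        rw [mul_one_div, le_div_iff₀ hτpos]
        linarith
      have step2 : ∑ τ ∈ Finset.Icc 1 s, 2 * B (s + 1) * (1 / (τ : ℝ))
          = 2 * B (s + 1) * ∑ τ ∈ Finset.Icc 1 s, (1 : ℝ) / τ := by
        rw [Finset.mul_sum]
      have step3 : ∑ τ ∈ Finset.Icc 1 s, (1 : ℝ) / τ ≤ 1 + L := by
        calc ∑ τ ∈ Finset.Icc 1 s, (1 : ℝ) / τ ≤ ∑ τ ∈ Finset.Icc 1 T, (1 : ℝ) / τ := by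
              apply Finset.sum_le_sum_of_subset_of_nonneg
              · exact Finset.Icc_subset_Icc_right (by omega)
              · intro i _ _; positivity
          _ ≤ 1 + Real.log T := sum_inv_Icc_le T
      calc ∑ τ ∈ Finset.Icc 1 s, A τ ≤ 2 * B (s+1) * ∑ τ ∈ Finset.Icc 1 s, (1:ℝ)/τ := by
            rw [← step2]; exact step1
        _ ≤ 2 * B (s+1) * (1 + L) := by
            apply mul_le_mul_of_nonneg_left step3 (by positivity)
    have hsplit : ∑ τ ∈ Finset.Icc 1 (s+1), A τ = (∑ τ ∈ Finset.Icc 1 s, A τ) + A (s+1) :=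
      Finset.sum_Icc_succ_top (by omega) A
    have hmain := h (s+1) ht
    rw [hsplit] at hmain
    have hAt : 0 ≤ A (s+1) := hA (s+1) ht
    have hspos : (0:ℝ) < (s+1 : ℕ) := by exact_mod_cast Nat.succ_pos s
    have hs1 : (1:ℝ) ≤ ((s+1 : ℕ) : ℝ) := by exact_mod_cast Nat.one_le_iff_ne_zero.mpr (Nat.succ_ne_zero s)
    rw [le_div_iff₀ hspos]
    -- hmain : (s+1) * A(s+1) ≤ B(s+1) + c * (S + A(s+1))
    -- with c*S ≤ c*2B(1+L) = B/2
    have hcS : c * (∑ τ ∈ Finset.Icc 1 s, A τ) ≤ (1/2) * B (s+1) := by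
      calc c * (∑ τ ∈ Finset.Icc 1 s, A τ) ≤ c * (2 * B (s+1) * (1 + L)) :=
            mul_le_mul_of_nonneg_left hsum hcpos.le
        _ = (1/2) * B (s+1) := by
            rw [show c * (2 * B (s+1) * (1+L)) = (c * (2 * (1+L))) * B (s+1) by ring, hckey]
    nlinarith [mul_le_mul_of_nonneg_left hAt hcpos.le, hmain, hcS,
      mul_le_mul_of_nonneg_right hc8 hAt]
end

section
/- Consider Optimistic Online Gradient Descent on a convex set K of diameter D: given loss vectors d_t, hint vectors d̂_t, weights α_t ≥ 0, and step size η > 0, with updates w_t = argmin_{w∈K}(α_t ⟨d̂_t, w⟩ + (1/2η)‖w - y_{t-1}‖²) and y_t = argmin_{y∈K}(α_t ⟨d_t, y⟩ + (1/2η)‖y - y_{t-1}‖²). Then for every w ∈ K: ∑_{t=1}^T α_t ⟨d_t, w_t - w⟩ ≤ 4D²/η + (η/2) ∑_{t=1}^T α_t² ‖d_t - d̂_t‖² - (1/2η) ∑_{t=1}^T ‖w_t - y_{t-1}‖². -/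
open scoped RealInnerProductSpace


lemma quad_argmin {n : ℕ} {K : Set (EuclideanSpace ℝ (Fin n))} (hK : Convex ℝ K)
    {c : ℝ} (hc : 0 < c) (a : ℝ) (g y₀ : EuclideanSpace ℝ (Fin n))
    {w : EuclideanSpace ℝ (Fin n)} (hwK : w ∈ K)
    (hmin : ∀ v ∈ K, a * ⟪g, w⟫ + c * ‖w - y₀‖ ^ 2 ≤ a * ⟪g, v⟫ + c * ‖v - y₀‖ ^ 2)
    {u : EuclideanSpace ℝ (Fin n)} (huK : u ∈ K) :
    a * ⟪g, w⟫ + c * ‖w - y₀‖ ^ 2 + c * ‖u - w‖ ^ 2 ≤ a * ⟪g, u⟫ + c * ‖u - y₀‖ ^ 2 := by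
  set A : ℝ := a * ⟪g, u - w⟫ + 2 * c * ⟪w - y₀, u - w⟫ with hA
  have hstep : ∀ l : ℝ, 0 < l → l ≤ 1 → 0 ≤ A + c * l * ‖u - w‖ ^ 2 := by
    intro l hl0 hl1
    have hvK : (1 - l) • w + l • u ∈ K := hK hwK huK (by linarith) (le_of_lt hl0) (by ring)
    have hveq : (1 - l) • w + l • u = w + l • (u - w) := by module
    rw [hveq] at hvK
    have h := hmin _ hvK
    have e1 : ⟪g, w + l • (u - w)⟫ = ⟪g, w⟫ + l * ⟪g, u - w⟫ := by
      rw [inner_add_right, real_inner_smul_right]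
    have e2 : ‖w + l • (u - w) - y₀‖ ^ 2
        = ‖w - y₀‖ ^ 2 + 2 * (l * ⟪w - y₀, u - w⟫) + l ^ 2 * ‖u - w‖ ^ 2 := by
      have hrw : w + l • (u - w) - y₀ = (w - y₀) + l • (u - w) := by abel
      rw [hrw, norm_add_sq_real, real_inner_smul_right, norm_smul]
      simp [abs_of_pos hl0, mul_pow]
    rw [e1, e2] at h
    nlinarith [h, hl0, mul_pos hl0 hl0]
  have hA0 : 0 ≤ A := by
    refine le_of_forall_pos_le_add ?_
    intro ε hε
    set X := ‖u - w‖ ^ 2 with hX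
    have hXnn : 0 ≤ X := by positivity
    set l := min 1 (ε / (c * X + 1)) with hl
    have hl0 : 0 < l := lt_min one_pos (div_pos hε (by positivity))
    have hl1 : l ≤ 1 := min_le_left _ _
    have h := hstep l hl0 hl1
    have hle : l * (c * X + 1) ≤ ε := by
      rw [← le_div_iff₀ (by positivity : (0:ℝ) < c * X + 1)]
      exact min_le_right _ _
    nlinarith [mul_nonneg (mul_nonneg hc.le hl0.le) hXnn]
  have e3 : a * ⟪g, u⟫ = a * ⟪g, w⟫ + a * ⟪g, u - w⟫ := by rw [inner_sub_right]; ring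
  have e4 : ‖u - y₀‖ ^ 2 = ‖w - y₀‖ ^ 2 + 2 * ⟪w - y₀, u - w⟫ + ‖u - w‖ ^ 2 := by
    have hrw : u - y₀ = (w - y₀) + (u - w) := by abel
    rw [hrw, norm_add_sq_real]
  rw [e3, e4]
  nlinarith [hA0]

lemma tel_Icc (f : ℕ → ℝ) (T : ℕ) :
    ∑ t ∈ Finset.Icc 1 T, (f (t - 1) - f t) = f 0 - f T := by
  induction T with
  | zero => simp
  | succ T ih =>
    rw [Finset.sum_Icc_succ_top (by omega : 1 ≤ T + 1), ih]
    simp only [Nat.add_sub_cancel]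
    ring

/-- Optimistic OGD regret bound: on a convex set `K` of diameter `D`, with
loss vectors `dv t`, hint vectors `dhat t`, weights `α t ≥ 0`, step size `η > 0`, and
updates `w t = argmin_{w ∈ K} (α t ⟪dhat t, w⟫ + ‖w - y (t-1)‖²/(2η))`,
`y t = argmin_{y ∈ K} (α t ⟪dv t, y⟫ + ‖y - y (t-1)‖²/(2η))`, for every `w ∈ K`:
`∑_{t=1}^T α t ⟪dv t, w t - w⟫
  ≤ 4D²/η + (η/2) ∑ α t² ‖dv t - dhat t‖² - (1/(2η)) ∑ ‖w t - y (t-1)‖²`. -/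
theorem stmt11 {n : ℕ} (K : Set (EuclideanSpace ℝ (Fin n))) (hK : Convex ℝ K)
    (D η : ℝ) (hη : 0 < η) (hD : ∀ a ∈ K, ∀ b ∈ K, ‖a - b‖ ≤ D)
    (T : ℕ) (α : ℕ → ℝ) (hα : ∀ t, 0 ≤ α t)
    (dv dhat : ℕ → EuclideanSpace ℝ (Fin n))
    (w y : ℕ → EuclideanSpace ℝ (Fin n))
    (hy0 : y 0 ∈ K)
    (hwK : ∀ t ∈ Finset.Icc 1 T, w t ∈ K)
    (hyK : ∀ t ∈ Finset.Icc 1 T, y t ∈ K)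
    (hw : ∀ t ∈ Finset.Icc 1 T, ∀ u ∈ K,
      α t * ⟪dhat t, w t⟫ + (1 / (2 * η)) * ‖w t - y (t - 1)‖ ^ 2
        ≤ α t * ⟪dhat t, u⟫ + (1 / (2 * η)) * ‖u - y (t - 1)‖ ^ 2)
    (hy : ∀ t ∈ Finset.Icc 1 T, ∀ u ∈ K,
      α t * ⟪dv t, y t⟫ + (1 / (2 * η)) * ‖y t - y (t - 1)‖ ^ 2
        ≤ α t * ⟪dv t, u⟫ + (1 / (2 * η)) * ‖u - y (t - 1)‖ ^ 2) :
    ∀ u ∈ K,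
      ∑ t ∈ Finset.Icc 1 T, α t * ⟪dv t, w t - u⟫
        ≤ 4 * D ^ 2 / η
          + (η / 2) * ∑ t ∈ Finset.Icc 1 T, (α t) ^ 2 * ‖dv t - dhat t‖ ^ 2
          - (1 / (2 * η)) * ∑ t ∈ Finset.Icc 1 T, ‖w t - y (t - 1)‖ ^ 2 := by
  intro u huK
  have hc : (0:ℝ) < 1 / (2 * η) := by positivity
  set c : ℝ := 1 / (2 * η) with hcdef
  -- per-step bound
  have step : ∀ t ∈ Finset.Icc 1 T,
      α t * ⟪dv t, w t - u⟫
        ≤ (η / 2) * (α t) ^ 2 * ‖dv t - dhat t‖ ^ 2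
          + (c * ‖u - y (t - 1)‖ ^ 2 - c * ‖u - y t‖ ^ 2)
          - c * ‖w t - y (t - 1)‖ ^ 2 := by
    intro t ht
    have h1 := quad_argmin hK hc (α t) (dhat t) (y (t - 1)) (hwK t ht) (hw t ht) (hyK t ht)
    have h2 := quad_argmin hK hc (α t) (dv t) (y (t - 1)) (hyK t ht) (hy t ht) huK
    -- Young's inequality
    have hcs : ⟪dv t - dhat t, w t - y t⟫ ≤ ‖dv t - dhat t‖ * ‖w t - y t‖ :=
      real_inner_le_norm _ _
    have hcs' : α t * ⟪dv t - dhat t, w t - y t⟫ ≤ α t * (‖dv t - dhat t‖ * ‖w t - y t‖) :=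
      mul_le_mul_of_nonneg_left hcs (hα t)
    have young : α t * ⟪dv t - dhat t, w t - y t⟫
        ≤ (η ^ 2 * (α t) ^ 2 * ‖dv t - dhat t‖ ^ 2 + ‖w t - y t‖ ^ 2) / (2 * η) := by
      rw [le_div_iff₀ (by positivity : (0:ℝ) < 2 * η)]
      nlinarith [sq_nonneg (η * α t * ‖dv t - dhat t‖ - ‖w t - y t‖), hcs']
    have young' : (η ^ 2 * (α t) ^ 2 * ‖dv t - dhat t‖ ^ 2 + ‖w t - y t‖ ^ 2) / (2 * η)
        = (η / 2) * (α t) ^ 2 * ‖dv t - dhat t‖ ^ 2 + c * ‖w t - y t‖ ^ 2 := by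
      rw [hcdef]; field_simp
    rw [young'] at young
    -- decomposition
    have dec : α t * ⟪dv t, w t - u⟫
        = α t * ⟪dv t - dhat t, w t - y t⟫
          + (α t * ⟪dhat t, w t⟫ - α t * ⟪dhat t, y t⟫)
          + (α t * ⟪dv t, y t⟫ - α t * ⟪dv t, u⟫) := by
      simp only [inner_sub_left, inner_sub_right]
      ring
    have hn : ‖y t - w t‖ ^ 2 = ‖w t - y t‖ ^ 2 := by rw [norm_sub_rev]
    rw [hn] at h1
    rw [dec]
    linarith [h1, h2, young]
  have sum_le := Finset.sum_le_sum step
  -- telescoping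
  have tel : ∑ t ∈ Finset.Icc 1 T, (c * ‖u - y (t - 1)‖ ^ 2 - c * ‖u - y t‖ ^ 2)
      = c * ‖u - y 0‖ ^ 2 - c * ‖u - y T‖ ^ 2 :=
    tel_Icc (fun i => c * ‖u - y i‖ ^ 2) T
  have hsplit : ∑ t ∈ Finset.Icc 1 T,
      ((η / 2) * (α t) ^ 2 * ‖dv t - dhat t‖ ^ 2
        + (c * ‖u - y (t - 1)‖ ^ 2 - c * ‖u - y t‖ ^ 2)
        - c * ‖w t - y (t - 1)‖ ^ 2)
      = (η / 2) * ∑ t ∈ Finset.Icc 1 T, (α t) ^ 2 * ‖dv t - dhat t‖ ^ 2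
        + (c * ‖u - y 0‖ ^ 2 - c * ‖u - y T‖ ^ 2)
        - c * ∑ t ∈ Finset.Icc 1 T, ‖w t - y (t - 1)‖ ^ 2 := by
    rw [← tel, Finset.mul_sum, Finset.mul_sum, ← Finset.sum_add_distrib,
      ← Finset.sum_sub_distrib]
    refine Finset.sum_congr rfl fun t _ => by ring
  rw [hsplit] at sum_le
  -- final bound on the telescoped term
  have hDb : ‖u - y 0‖ ≤ D := hD u huK (y 0) hy0
  have hDnn : (0:ℝ) ≤ D := le_trans (norm_nonneg _) hDb
  have hsq : ‖u - y 0‖ ^ 2 ≤ D ^ 2 := by nlinarith [norm_nonneg (u - y 0)]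
  have hfin : c * ‖u - y 0‖ ^ 2 - c * ‖u - y T‖ ^ 2 ≤ 4 * D ^ 2 / η := by
    have h1 : c * ‖u - y 0‖ ^ 2 ≤ c * D ^ 2 := mul_le_mul_of_nonneg_left hsq hc.le
    have h2 : 0 ≤ c * ‖u - y T‖ ^ 2 := by positivity
    have h3 : c * D ^ 2 ≤ 4 * D ^ 2 / η := by
      rw [hcdef]
      have he : 4 * D ^ 2 / η - 1 / (2 * η) * D ^ 2 = 7 * D ^ 2 / (2 * η) := by
        field_simp; ring
      nlinarith [he, div_nonneg (by positivity : (0:ℝ) ≤ 7 * D ^ 2) (by positivity : (0:ℝ) ≤ 2 * η)]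
    linarith
  linarith [sum_le]
end
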